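/- Let q be an odd prime power and n ≥ 0 an integer. Then the number of involutions in GL_n(𝔽_q), i.e. |{x ∈ GL_n(𝔽_q) : x² = 1}|, equals Σ_{r=0}^n q^{r(n−r)} [n r]_q. -/

import Mathlib

open Module Submodule LinearMap Finset

namespace Stmt5

variable {F : Type} [Field F] [Fintype F]

lemma two_ne_zero' (hodd : Odd (Fintype.card F)) : (2 : F) ≠ 0 := by
  intro h
  haveI := ringChar.charP F
  have h2 : ringChar F ∣ 2 := by
    have := (CharP.cast_eq_zero_iff F (ringChar F) 2).mp (by exact_mod_cast h)
    exact this
  have hchar : ringChar F = 2 := by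
    rcases (Nat.dvd_prime Nat.prime_two).mp h2 with h1 | h1
    · exfalso
      have : (1 : F) = 0 := by
        have := (CharP.cast_eq_zero_iff F (ringChar F) 1).mpr (by rw [h1])
        simpa using this
      exact one_ne_zero this
    · exact h1
  have := FiniteField.even_card_iff_char_two.mp hchar
  have := Nat.odd_iff.mp hodd
  omega

def unitsSqEquiv {M : Type*} [Monoid M] : {x : Mˣ // x ^ 2 = 1} ≃ {a : M // a * a = 1} where
  toFun x := ⟨(x.1 : M), by
    have := congrArg (Units.val) x.2
    rwa [Units.val_pow_eq_pow_val, Units.val_one, pow_two] at this⟩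
  invFun a := ⟨⟨a.1, a.1, a.2, a.2⟩, Units.ext (by simp [pow_two, a.2])⟩
  left_inv x := Subtype.ext (Units.ext rfl)
  right_inv a := rfl

def mulSqEquiv {M N : Type*} [Monoid M] [Monoid N] (e : M ≃* N) :
    {a : M // a * a = 1} ≃ {b : N // b * b = 1} :=
  Equiv.subtypeEquiv e.toEquiv (fun a => by
    show a * a = 1 ↔ e a * e a = 1
    constructor
    · intro h; rw [← map_mul, h, map_one]
    · intro h
      apply e.injective
      rw [map_mul, h, map_one])

def invEquivIdem {A : Type*} [Ring A] [Algebra F A] (h2 : (2 : F) ≠ 0) :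
    {a : A // a * a = 1} ≃ {p : A // p * p = p} where
  toFun a := ⟨(2 : F)⁻¹ • (a.1 + 1), by
    have key : (a.1 + 1) * (a.1 + 1) = (2 : F) • (a.1 + 1) := by
      rw [add_mul, mul_add, one_mul, a.2, mul_one, two_smul]
      abel
    rw [smul_mul_smul_comm, key, smul_smul]
    congr 1
    field_simp⟩
  invFun p := ⟨(2 : F) • p.1 - 1, by
    have key : ((2 : F) • p.1 - 1) * ((2 : F) • p.1 - 1)
        = (2 * 2 : F) • (p.1 * p.1) - (2 : F) • p.1 - (2 : F) • p.1 + 1 := by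
      rw [sub_mul, one_mul, mul_sub, mul_one, smul_mul_smul_comm]
      abel
    rw [key, p.2, two_mul, add_smul]
    abel⟩
  left_inv a := Subtype.ext (by
    simp only
    rw [smul_smul, mul_inv_cancel₀ h2, one_smul, add_sub_cancel_right])
  right_inv p := Subtype.ext (by
    simp only
    rw [sub_add_cancel, smul_smul, inv_mul_cancel₀ h2, one_smul])



def idemFiberEquiv {V : Type*} [AddCommGroup V] [Module F V] (U : Submodule F V) :
    {p : {p : Module.End F V // p * p = p} // LinearMap.range p.1 = U}
      ≃ {f : V →ₗ[F] U // ∀ x : U, f x = x} where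
  toFun p := ⟨LinearMap.codRestrict U p.1.1 (fun v => p.2.le (LinearMap.mem_range_self p.1.1 v)),
    fun x => by
      apply Subtype.ext
      simp only [LinearMap.codRestrict_apply]
      obtain ⟨y, hy⟩ : (x : V) ∈ LinearMap.range p.1.1 := by rw [p.2]; exact x.2
      rw [← hy, ← Module.End.mul_apply, p.1.2]⟩
  invFun f := ⟨⟨U.subtype ∘ₗ f.1, by
      apply LinearMap.ext; intro v
      simp only [Module.End.mul_apply, LinearMap.comp_apply, Submodule.coe_subtype]
      exact congrArg Subtype.val (f.2 (f.1 v))⟩, by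
      apply le_antisymm
      · rintro _ ⟨v, rfl⟩
        exact (f.1 v).2
      · intro u hu
        exact ⟨u, congrArg Subtype.val (f.2 ⟨u, hu⟩)⟩⟩
  left_inv p := by
    apply Subtype.ext; apply Subtype.ext
    exact LinearMap.subtype_comp_codRestrict _ _ _
  right_inv f := by
    apply Subtype.ext
    apply LinearMap.ext; intro v
    apply Subtype.ext
    simp [LinearMap.codRestrict_apply]

noncomputable def projEquivHom {V : Type*} [AddCommGroup V] [Module F V] {U W : Submodule F V}
    (h : IsCompl U W) :
    {f : V →ₗ[F] U // ∀ x : U, f x = x} ≃ (W →ₗ[F] U) where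
  toFun f := f.1 ∘ₗ W.subtype
  invFun g := ⟨U.projectionOnto W h + g ∘ₗ (W.projectionOnto U h.symm), fun x => by
    simp only [LinearMap.add_apply, LinearMap.comp_apply]
    rw [Submodule.projectionOnto_apply_left h x,
      Submodule.projectionOnto_apply_of_mem_right h.symm x.2, map_zero, add_zero]⟩
  left_inv f := by
    apply Subtype.ext; apply LinearMap.ext; intro v
    simp only [LinearMap.add_apply, LinearMap.comp_apply, Submodule.coe_subtype]
    have hv : ((U.projectionOnto W h v : U) : V) + (W.projectionOnto U h.symm v : V) = v :=
      Submodule.projection_add_projection_eq_self h v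
    conv_rhs => rw [← hv]
    rw [map_add, f.2]
  right_inv g := by
    apply LinearMap.ext; intro w
    simp only [LinearMap.add_apply, LinearMap.comp_apply, Submodule.coe_subtype]
    rw [Submodule.projectionOnto_apply_of_mem_right h w.2,
      Submodule.projectionOnto_apply_left h.symm w, zero_add]

def spanFiberEquiv {V : Type*} [AddCommGroup V] [Module F V] [FiniteDimensional F V] {r : ℕ}
    (U : Submodule F V) (hU : finrank F U = r) :
    {s : {s : Fin r → V // LinearIndependent F s} // Submodule.span F (Set.range s.1) = U}
      ≃ {t : Fin r → U // LinearIndependent F t} where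
  toFun s := ⟨fun i => ⟨s.1.1 i, by have h := Submodule.subset_span (R := F) (Set.mem_range_self (f := s.1.1) i); rwa [s.2] at h⟩,
    LinearIndependent.of_comp U.subtype (by exact s.1.2)⟩
  invFun t := ⟨⟨fun i => (t.1 i : V),
      by exact (LinearMap.linearIndependent_iff U.subtype (Submodule.ker_subtype U)).mpr t.2⟩, by
    show Submodule.span F (Set.range (⇑U.subtype ∘ t.1)) = U
    rw [Set.range_comp, ← Submodule.map_span,
      t.2.span_eq_top_of_card_eq_finrank' (by simp [hU]), Submodule.map_subtype_top]⟩
  left_inv s := by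
    apply Subtype.ext; apply Subtype.ext; rfl
  right_inv t := by
    apply Subtype.ext; funext i; apply Subtype.ext; rfl

lemma natCard_sigma {ι : Type*} [Fintype ι] (f : ι → Type*) [∀ i, Finite (f i)] :
    Nat.card (Σ i, f i) = ∑ i, Nat.card (f i) := by
  letI : ∀ i, Fintype (f i) := fun i => Fintype.ofFinite _
  rw [Nat.card_eq_fintype_card, Fintype.card_sigma]
  exact Finset.sum_congr rfl fun i _ => (Nat.card_eq_fintype_card).symm



attribute [local instance] Fintype.ofFinite

local notation "q" => Fintype.card F

lemma card_proj {V : Type*} [AddCommGroup V] [Module F V] [Finite V] (U : Submodule F V) :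
    Nat.card {f : V →ₗ[F] U // ∀ x : U, f x = x}
      = q ^ (finrank F U * (finrank F V - finrank F U)) := by
  haveI : Module.Finite F V := Module.Finite.of_finite
  obtain ⟨W, hW⟩ := Submodule.exists_isCompl U
  haveI : Finite (W →ₗ[F] U) :=
    Finite.of_injective (fun (f : W →ₗ[F] U) => (f : W → U)) DFunLike.coe_injective
  rw [Nat.card_congr (projEquivHom hW), Nat.card_eq_fintype_card,
    card_eq_pow_finrank (K := F), finrank_linearMap]
  have h1 : finrank F U + finrank F W = finrank F V := Submodule.finrank_add_eq_of_isCompl hW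
  have h3 : finrank F V - finrank F U = finrank F W := by omega
  rw [h3, mul_comm]

lemma card_involutions (h2 : (2 : F) ≠ 0) (n : ℕ) :
    Nat.card {x : GL (Fin n) F // x ^ 2 = 1}
      = ∑ U : Submodule F (Fin n → F), q ^ (finrank F U * (n - finrank F U)) := by
  haveI : Finite ((Fin n → F) →ₗ[F] (Fin n → F)) :=
    Finite.of_injective (fun (f : (Fin n → F) →ₗ[F] (Fin n → F)) => (f : (Fin n → F) → (Fin n → F)))
      DFunLike.coe_injective
  have e : {x : GL (Fin n) F // x ^ 2 = 1} ≃ {p : Module.End F (Fin n → F) // p * p = p} :=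
    (unitsSqEquiv.trans
      (mulSqEquiv (Matrix.toLinAlgEquiv' (R := F) (n := Fin n)).toRingEquiv.toMulEquiv)).trans
      (invEquivIdem h2)
  rw [Nat.card_congr e, Nat.card_congr (Equiv.sigmaFiberEquiv
    (fun p : {p : Module.End F (Fin n → F) // p * p = p} => LinearMap.range p.1)).symm,
    natCard_sigma]
  have hV : finrank F (Fin n → F) = n := by
    rw [Module.finrank_fintype_fun_eq_card, Fintype.card_fin]
  apply Finset.sum_congr rfl
  intro U _
  rw [Nat.card_congr (idemFiberEquiv U), card_proj, hV]

lemma card_grassmannian (n r : ℕ) (hr : r ≤ n) :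
    Nat.card {U : Submodule F (Fin n → F) // finrank F U = r} * ∏ i ∈ range r, (q ^ r - q ^ i)
      = ∏ i ∈ range r, (q ^ n - q ^ i) := by
  classical
  have hV : finrank F (Fin n → F) = n := by
    rw [Module.finrank_fintype_fun_eq_card, Fintype.card_fin]
  have hA : Nat.card {s : Fin r → (Fin n → F) // LinearIndependent F s}
      = ∏ i ∈ range r, (q ^ n - q ^ i) := by
    rw [card_linearIndependent (by rw [hV]; exact hr), hV]
    exact Fin.prod_univ_eq_prod_range (fun j => q ^ n - q ^ j) r
  have key : (∏ i ∈ range r, (q ^ n - q ^ i))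
      = ∑ U : Submodule F (Fin n → F),
          (if finrank F U = r then ∏ i ∈ range r, (q ^ r - q ^ i) else 0) := by
    rw [← hA, ← Nat.card_congr (Equiv.sigmaFiberEquiv
      (fun s : {s : Fin r → (Fin n → F) // LinearIndependent F s} =>
        Submodule.span F (Set.range s.1))), natCard_sigma]
    apply Finset.sum_congr rfl
    intro U _
    split_ifs with h
    · rw [Nat.card_congr (spanFiberEquiv U h), card_linearIndependent (le_of_eq h.symm), h]
      exact Fin.prod_univ_eq_prod_range (fun j => q ^ r - q ^ j) r
    · have : IsEmpty {s : {s : Fin r → (Fin n → F) // LinearIndependent F s} //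
          Submodule.span F (Set.range s.1) = U} := ⟨fun s => h (by
        rw [← s.2, finrank_span_eq_card s.1.2, Fintype.card_fin])⟩
      exact Nat.card_of_isEmpty
  rw [key, ← Finset.sum_filter, Finset.sum_const, smul_eq_mul]
  congr 1
  rw [Nat.card_eq_fintype_card, Fintype.card_subtype]


lemma prod_sub_eq (x : ℚ) (hx : x ≠ 0) (m r : ℕ) (hrm : r ≤ m) :
    ∏ i ∈ range r, (x ^ m - x ^ i)
      = (∏ i ∈ range r, x ^ i) * ∏ i ∈ Icc 1 r, (x ^ (m - r + i) - 1) := by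
  have h1 : ∀ i ∈ range r, x ^ m - x ^ i = x ^ i * (x ^ (m - i) - 1) := by
    intro i hi
    have := Finset.mem_range.mp hi
    rw [mul_sub, mul_one, ← pow_add]
    congr 2
    omega
  rw [Finset.prod_congr rfl h1, Finset.prod_mul_distrib]
  congr 1
  rw [← Finset.prod_range_reflect (fun j => x ^ (m - j) - 1) r,
    show Finset.Icc 1 r = Finset.Ico 1 (r + 1) from (Finset.Ico_succ_right_eq_Icc 1 r).symm,
    Finset.prod_Ico_eq_prod_range]
  apply Finset.prod_congr (by rw [Nat.add_sub_cancel])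
  intro j hj
  have : j < r := Finset.mem_range.mp hj
  congr 2
  omega

lemma final_term (x : ℚ) (hx1 : 1 < x) {n r N : ℕ} (hrn : r ≤ n)
    (hG : (N : ℚ) * ∏ i ∈ range r, (x ^ r - x ^ i) = ∏ i ∈ range r, (x ^ n - x ^ i)) :
    (N : ℚ) = ∏ i ∈ Icc 1 r, (x ^ (n - r + i) - 1) / (x ^ i - 1) := by
  have hx0 : x ≠ 0 := by linarith
  have hC : (∏ i ∈ range r, x ^ i) ≠ 0 :=
    Finset.prod_ne_zero_iff.mpr fun i _ => pow_ne_zero i hx0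
  have hDen : ∀ i ∈ Icc 1 r, x ^ i - 1 ≠ 0 := by
    intro i hi
    have h1 : 1 ≤ i := (Finset.mem_Icc.mp hi).1
    have : 1 < x ^ i := one_lt_pow₀ hx1 (by omega)
    intro h; linarith [this]
  rw [prod_sub_eq x hx0 n r hrn, prod_sub_eq x hx0 r r le_rfl] at hG
  simp only [Nat.sub_self, Nat.zero_add] at hG
  have hD : (∏ i ∈ Icc 1 r, (x ^ i - 1)) ≠ 0 := Finset.prod_ne_zero_iff.mpr hDen
  rw [Finset.prod_div_distrib, eq_div_iff hD]
  apply mul_left_cancel₀ hC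
  linear_combination hG

end Stmt5

attribute [local instance] Fintype.ofFinite

/-- For a finite field `F` with `q` elements, `q` odd, the number of involutions in
`GLₙ(F)` equals `Σ_{r=0}^n q^{r(n-r)} [n r]_q`, where the Gaussian binomial coefficient
is `[n r]_q = ∏_{i=1}^r (q^{n-r+i} - 1)/(q^i - 1)`. -/
theorem stmt5 (F : Type) [Field F] [Fintype F] (hodd : Odd (Fintype.card F)) (n : ℕ) :
    (Nat.card {x : GL (Fin n) F // x ^ 2 = 1} : ℚ)
      = ∑ r ∈ Finset.range (n + 1),
          (Fintype.card F : ℚ) ^ (r * (n - r)) *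
            ∏ i ∈ Finset.Icc 1 r,
              ((Fintype.card F : ℚ) ^ (n - r + i) - 1) / ((Fintype.card F : ℚ) ^ i - 1) := by
  classical
  have hq1 : 1 < Fintype.card F := Fintype.one_lt_card
  have h2 : (2 : F) ≠ 0 := Stmt5.two_ne_zero' hodd
  have hV : Module.finrank F (Fin n → F) = n := by
    rw [Module.finrank_fintype_fun_eq_card, Fintype.card_fin]
  rw [Stmt5.card_involutions h2 n]
  push_cast
  rw [← Finset.sum_fiberwise_of_maps_to
    (g := fun U : Submodule F (Fin n → F) => Module.finrank F U)
    (t := Finset.range (n + 1))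
    (fun U _ => Finset.mem_range.mpr (by
      show Module.finrank F U < n + 1
      have h := Submodule.finrank_le U
      rw [hV] at h
      omega))
    (fun U => (Fintype.card F : ℚ) ^ (Module.finrank F U * (n - Module.finrank F U)))]
  apply Finset.sum_congr rfl
  intro r hr
  have hrn : r ≤ n := Nat.lt_succ_iff.mp (Finset.mem_range.mp hr)
  have hsum : ∑ U ∈ Finset.filter (fun U : Submodule F (Fin n → F) => Module.finrank F U = r)
          Finset.univ, (Fintype.card F : ℚ) ^ (Module.finrank F U * (n - Module.finrank F U))
        = ∑ _U ∈ Finset.filter (fun U : Submodule F (Fin n → F) => Module.finrank F U = r)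
          Finset.univ, (Fintype.card F : ℚ) ^ (r * (n - r)) :=
    Finset.sum_congr rfl (fun U hU => by rw [(Finset.mem_filter.mp hU).2])
  rw [hsum, Finset.sum_const, nsmul_eq_mul]
  have hN : (Finset.filter (fun U : Submodule F (Fin n → F) => Module.finrank F U = r)
        Finset.univ).card
      = Nat.card {U : Submodule F (Fin n → F) // Module.finrank F U = r} := by
    rw [Nat.card_eq_fintype_card, Fintype.card_subtype]
  have hG := Stmt5.card_grassmannian (F := F) n r hrn
  have hGQ := congrArg (Nat.cast (R := ℚ)) hG
  have cast1 : ((∏ i ∈ Finset.range r, (Fintype.card F ^ r - Fintype.card F ^ i) : ℕ) : ℚ)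
      = ∏ i ∈ Finset.range r, ((Fintype.card F : ℚ) ^ r - (Fintype.card F : ℚ) ^ i) := by
    rw [Nat.cast_prod]
    apply Finset.prod_congr rfl
    intro i hi
    have := Finset.mem_range.mp hi
    rw [Nat.cast_sub (Nat.pow_le_pow_right (le_of_lt hq1) (by omega))]
    push_cast
    ring
  have cast2 : ((∏ i ∈ Finset.range r, (Fintype.card F ^ n - Fintype.card F ^ i) : ℕ) : ℚ)
      = ∏ i ∈ Finset.range r, ((Fintype.card F : ℚ) ^ n - (Fintype.card F : ℚ) ^ i) := by
    rw [Nat.cast_prod]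
    apply Finset.prod_congr rfl
    intro i hi
    have := Finset.mem_range.mp hi
    rw [Nat.cast_sub (Nat.pow_le_pow_right (le_of_lt hq1) (by omega))]
    push_cast
    ring
  rw [Nat.cast_mul, cast1, cast2] at hGQ
  rw [hN, mul_comm]
  congr 1
  exact Stmt5.final_term (Fintype.card F : ℚ) (by exact_mod_cast hq1) hrn hGQ
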